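/- Let p > 0, λ > 0, σ = (π/4)·min{1,1/p}, and f_λ(x) = exp(-λ√2·x^{-p}) for x > 0. Then for all integers k ≥ 0 and all x > 0, |f_λ^{(k)}(x)| ≤ (2/sin σ)^k · (k/(λpe))^{k/p} · k!. -/

import Mathlib

set_option maxHeartbeats 1000000

open Real Metric Complex

lemma cauchy_iteratedDeriv_bound {F : ℂ → ℂ} {c : ℂ} {r M : ℝ} (hr : 0 < r)
    (hd : DifferentiableOn ℂ F (Metric.closedBall c r))
    (hM : ∀ z ∈ Metric.closedBall c r, ‖F z‖ ≤ M) (k : ℕ) :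
    ‖iteratedDeriv k F c‖ ≤ (k.factorial : ℝ) * M / r ^ k := by
  set R : NNReal := ⟨r, hr.le⟩ with hRdef
  have hRr : (R : ℝ) = r := rfl
  have hR0 : 0 < R := by rwa [← NNReal.coe_pos, hRr]
  have hd' : DifferentiableOn ℂ F (Metric.closedBall c R) := by rwa [hRr]
  have hps := hd'.hasFPowerSeriesOnBall hR0
  set p := cauchyPowerSeries F c R with hp
  have h1 : iteratedDeriv k F c = iteratedFDeriv ℂ k F c (fun _ => 1) :=
    iteratedDeriv_eq_iteratedFDeriv
  have h2 := hps.factorial_smul (1 : ℂ) k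
  have hM0 : 0 ≤ M := le_trans (norm_nonneg _) (hM c (Metric.mem_closedBall_self hr.le))
  have hint : ∫ θ : ℝ in (0:ℝ)..2 * π, ‖F (circleMap c r θ)‖ ≤ 2 * π * M := by
    have hcont : ContinuousOn (fun θ : ℝ => ‖F (circleMap c r θ)‖) (Set.uIcc 0 (2*π)) := by
      apply ContinuousOn.norm
      apply hd.continuousOn.comp (continuous_circleMap c r).continuousOn
      intro θ _
      exact Metric.sphere_subset_closedBall (circleMap_mem_sphere c hr.le θ)
    calc ∫ θ : ℝ in (0:ℝ)..2 * π, ‖F (circleMap c r θ)‖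
        ≤ ∫ _ : ℝ in (0:ℝ)..2 * π, M := by
          apply intervalIntegral.integral_mono_on Real.two_pi_pos.le
          · exact hcont.intervalIntegrable
          · exact intervalIntegrable_const
          · intro θ _
            exact hM _ (Metric.sphere_subset_closedBall (circleMap_mem_sphere c hr.le θ))
      _ = 2 * π * M := by simp [mul_comm]
  have h3 : ‖p k‖ ≤ M / r ^ k := by
    refine (norm_cauchyPowerSeries_le F c R k).trans ?_
    rw [hRr, _root_.abs_of_nonneg hr.le]
    have h5 : (2 * π)⁻¹ * ∫ θ : ℝ in (0:ℝ)..2 * π, ‖F (circleMap c r θ)‖ ≤ M := by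
      rw [inv_mul_le_iff₀ Real.two_pi_pos]
      linarith [hint]
    calc ((2 * π)⁻¹ * ∫ θ : ℝ in (0:ℝ)..2 * π, ‖F (circleMap c r θ)‖) * r⁻¹ ^ k
        ≤ M * r⁻¹ ^ k := mul_le_mul_of_nonneg_right h5 (by positivity)
      _ = M / r ^ k := by rw [inv_pow]; ring
  have h4 : ‖iteratedDeriv k F c‖ ≤ (k.factorial : ℝ) * ‖p k‖ := by
    rw [h1, ← h2, ← Nat.cast_smul_eq_nsmul ℝ, norm_smul]
    simp only [Real.norm_natCast]
    apply mul_le_mul_of_nonneg_left _ (by positivity)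
    calc ‖p k fun _ => 1‖ ≤ ‖p k‖ * ∏ _i : Fin k, ‖(1:ℂ)‖ := (p k).le_opNorm _
      _ = ‖p k‖ := by simp
  calc ‖iteratedDeriv k F c‖ ≤ (k.factorial : ℝ) * ‖p k‖ := h4
    _ ≤ (k.factorial : ℝ) * (M / r ^ k) := by
        apply mul_le_mul_of_nonneg_left h3 (by positivity)
    _ = (k.factorial : ℝ) * M / r ^ k := by ring

lemma core_bound {t a : ℝ} (ht : 0 < t) (ha : 0 < a) :
    t ^ a * Real.exp (-t) ≤ (a / Real.exp 1) ^ a := by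
  have hae : 0 < a / Real.exp 1 := by positivity
  rw [Real.rpow_def_of_pos ht, Real.rpow_def_of_pos hae, ← Real.exp_add]
  apply Real.exp_le_exp.mpr
  have hlog : Real.log (t / a) ≤ t / a - 1 := Real.log_le_sub_one_of_pos (by positivity)
  rw [Real.log_div ht.ne' ha.ne'] at hlog
  have h2 : a * (Real.log t - Real.log a) ≤ a * (t / a - 1) :=
    mul_le_mul_of_nonneg_left hlog ha.le
  rw [Real.log_div ha.ne' (Real.exp_pos 1).ne', Real.log_exp]
  have : a * (t/a - 1) = t - a := by field_simp
  nlinarith [this]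

lemma sup_bound {p lam : ℝ} (hp : 0 < p) (hlam : 0 < lam) (k : ℕ) {y : ℝ} (hy : 0 < y) :
    y ^ (k : ℝ) * Real.exp (-(lam * y ^ p)) ≤
      ((k : ℝ) / (lam * p * Real.exp 1)) ^ ((k : ℝ) / p) := by
  rcases Nat.eq_zero_or_pos k with rfl | hk
  · simp only [Nat.cast_zero, Real.rpow_zero, one_mul, zero_div, Real.rpow_zero]
    exact Real.exp_le_one_iff.mpr (neg_nonpos.mpr (by positivity))
  have hk' : (0:ℝ) < k := by exact_mod_cast hk
  set a : ℝ := (k : ℝ) / p with ha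
  have ha0 : 0 < a := by positivity
  set t : ℝ := lam * y ^ p with htdef
  have ht : 0 < t := by positivity
  have hyp : 0 < y ^ p := Real.rpow_pos_of_pos hy p
  have h1 : y ^ (k:ℝ) = (t / lam) ^ a := by
    have : t / lam = y ^ p := by field_simp [htdef]; exact htdef
    rw [this, ← Real.rpow_mul hy.le]
    congr 1
    field_simp [ha]
    rw [ha]; field_simp
  have h2 : (t / lam) ^ a * Real.exp (-t) ≤ (a / (lam * Real.exp 1)) ^ a := by
    rw [Real.div_rpow ht.le hlam.le]
    have := core_bound ht ha0
    calc t ^ a / lam ^ a * Real.exp (-t) = (t ^ a * Real.exp (-t)) / lam ^ a := by ring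
      _ ≤ (a / Real.exp 1) ^ a / lam ^ a := by gcongr
      _ = (a / (lam * Real.exp 1)) ^ a := by
          rw [Real.div_rpow ha0.le (by positivity : (0:ℝ) ≤ lam * Real.exp 1),
            Real.mul_rpow hlam.le (Real.exp_pos 1).le,
            Real.div_rpow ha0.le (Real.exp_pos 1).le]
          rw [div_div, mul_comm]
  have h3 : a / (lam * Real.exp 1) = (k : ℝ) / (lam * p * Real.exp 1) := by
    rw [ha, div_div]; congr 1; ring
  calc y ^ (k:ℝ) * Real.exp (-(lam * y ^ p)) = (t/lam) ^ a * Real.exp (-t) := by rw [h1]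
    _ ≤ (a / (lam * Real.exp 1)) ^ a := h2
    _ = ((k : ℝ) / (lam * p * Real.exp 1)) ^ ((k:ℝ)/p) := by rw [h3]

lemma sigma_facts {p σ : ℝ} (hp : 0 < p) (hσ : σ = (π / 4) * min 1 (1 / p)) :
    0 < σ ∧ σ ≤ π/4 ∧ p * σ ≤ π/4 ∧ 0 < Real.sin σ ∧ Real.sin σ < 1 := by
  have hπ := Real.pi_pos
  have hmin : 0 < min 1 (1/p) := lt_min one_pos (by positivity)
  have hσ0 : 0 < σ := by rw [hσ]; positivity
  have hσ4 : σ ≤ π/4 := by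
    rw [hσ]
    calc π/4 * min 1 (1/p) ≤ π/4 * 1 := by
          apply mul_le_mul_of_nonneg_left (min_le_left _ _) (by positivity)
      _ = π/4 := mul_one _
  have hpσ : p * σ ≤ π/4 := by
    have h1 : σ ≤ π/4 * (1/p) := by
      rw [hσ]
      apply mul_le_mul_of_nonneg_left (min_le_right _ _) (by positivity)
    calc p * σ ≤ p * (π/4 * (1/p)) := mul_le_mul_of_nonneg_left h1 hp.le
      _ = π/4 := by field_simp
  have hs0 : 0 < Real.sin σ :=
    Real.sin_pos_of_pos_of_lt_pi hσ0 (lt_of_le_of_lt hσ4 (by linarith))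
  have hs1 : Real.sin σ < 1 := by
    have h1 : Real.sin σ < σ := Real.sin_lt hσ0
    have : π ≤ 4 := Real.pi_le_four
    linarith
  exact ⟨hσ0, hσ4, hpσ, hs0, hs1⟩

lemma F_bound {p lam σ x : ℝ} (hp : 0 < p) (hlam : 0 < lam)
    (hσ : σ = (π / 4) * min 1 (1 / p)) (hx : 0 < x)
    {z : ℂ} (hz : z ∈ Metric.closedBall (x : ℂ) (x * Real.sin σ)) :
    0 < z.re ∧
      ‖Complex.exp (-((lam * Real.sqrt 2 : ℝ) : ℂ) * z ^ ((-p : ℝ) : ℂ))‖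
        ≤ Real.exp (-(lam * (2*x) ^ (-p))) := by
  obtain ⟨hσ0, hσ4, hpσ, hs0, hs1⟩ := sigma_facts hp hσ
  have hπ := Real.pi_pos
  set s := Real.sin σ with hs
  set w : ℂ := z - x with hw
  have hwabs : ‖w‖ ≤ x * s := by
    rw [hw, ← Complex.dist_eq]
    exact Metric.mem_closedBall.mp hz
  set a := w.re with ha
  set b := w.im with hb
  have hab : a^2 + b^2 ≤ (x*s)^2 := by
    have h1 := Complex.sq_norm w
    have h2 : (‖w‖)^2 ≤ (x*s)^2 := by
      apply pow_le_pow_left₀ (norm_nonneg w) hwabs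
    rw [Complex.normSq_apply] at h1
    nlinarith
  have hzre : z.re = x + a := by
    have : z = x + w := by rw [hw]; ring
    rw [this]; simp; rfl
  have hzim : z.im = b := by
    have : z = x + w := by rw [hw]; ring
    rw [this]; simp; rfl
  have hare : |a| ≤ x * s := le_trans (Complex.abs_re_le_norm w) hwabs
  have hre0 : 0 < z.re := by
    rw [hzre]
    have := abs_le.mp hare
    nlinarith
  refine ⟨hre0, ?_⟩
  have hzne : z ≠ 0 := by
    intro h0
    rw [h0] at hre0; simp at hre0
  have hzabs0 : 0 < ‖z‖ := norm_pos_iff.mpr hzne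
  -- |im z| ≤ s * |z|
  have him : |z.im| ≤ s * ‖z‖ := by
    have hsq : z.im^2 ≤ s^2 * (‖z‖)^2 := by
      have h1 : (‖z‖)^2 = z.re^2 + z.im^2 := by
        rw [Complex.sq_norm, Complex.normSq_apply]; ring
      have h2 : (0:ℝ) ≤ x^2*s^2 - a^2 - b^2 := by nlinarith
      have h3 : (0:ℝ) ≤ 1 - s^2 := by nlinarith
      rw [h1, hzre, hzim]
      nlinarith [sq_nonneg (a + x * s^2), mul_nonneg h2 h3]
    have h2 : |z.im| = Real.sqrt (z.im^2) := (Real.sqrt_sq_eq_abs _).symm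
    rw [h2]
    calc Real.sqrt (z.im^2) ≤ Real.sqrt ((s * ‖z‖)^2) := by
          apply Real.sqrt_le_sqrt; rw [mul_pow]; exact hsq
      _ = s * ‖z‖ := Real.sqrt_sq (by positivity)
  -- |arg z| ≤ σ
  have harg : |Complex.arg z| ≤ σ := by
    have hargeq : Complex.arg z = Real.arcsin (z.im / ‖z‖) :=
      Complex.arg_of_re_nonneg hre0.le
    have hσ2 : σ < π/2 := by linarith
    have hdiv : |z.im / ‖z‖| ≤ s := by
      rw [abs_div, abs_of_pos hzabs0, div_le_iff₀ hzabs0]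
      exact him
    obtain ⟨hd1, hd2⟩ := abs_le.mp hdiv
    rw [hargeq, abs_le]
    constructor
    · rw [le_arcsin_iff_sin_le' ⟨by linarith, by linarith⟩, Real.sin_neg]
      linarith
    · rw [arcsin_le_iff_le_sin' ⟨by linarith, hσ2⟩]
      linarith
  -- |z| ≤ 2x
  have habs2x : ‖z‖ ≤ 2 * x := by
    calc ‖z‖ = ‖(x:ℂ) + w‖ := by rw [hw]; ring_nf
      _ ≤ ‖(x:ℂ)‖ + ‖w‖ := norm_add_le _ _
      _ ≤ x + x * s := by
          rw [Complex.norm_of_nonneg hx.le]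
          linarith
      _ ≤ 2 * x := by nlinarith
  -- real part of z ^ (-p)
  have hrepow : (z ^ ((-p : ℝ) : ℂ)).re = ‖z‖ ^ (-p) * Real.cos (Complex.arg z * (-p)) :=
    Complex.cpow_ofReal_re z (-p)
  have hcos : Real.sqrt 2 / 2 ≤ Real.cos (Complex.arg z * (-p)) := by
    have h1 : |Complex.arg z * (-p)| ≤ π/4 := by
      rw [abs_mul, abs_neg, abs_of_pos hp]
      calc |Complex.arg z| * p ≤ σ * p := mul_le_mul_of_nonneg_right harg hp.le
        _ ≤ π/4 := by rw [mul_comm]; exact hpσ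
    calc Real.sqrt 2 / 2 = Real.cos (π/4) := Real.cos_pi_div_four.symm
      _ ≤ Real.cos |Complex.arg z * (-p)| :=
          Real.cos_le_cos_of_nonneg_of_le_pi (abs_nonneg _) (by linarith) h1
      _ = Real.cos (Complex.arg z * (-p)) := Real.cos_abs _
  have hpowle : (2*x) ^ (-p) ≤ ‖z‖ ^ (-p) :=
    Real.rpow_le_rpow_of_nonpos hzabs0 habs2x (by linarith)
  have hpow0 : 0 < (2*x) ^ (-p) := Real.rpow_pos_of_pos (by linarith) _
  -- the norm
  have hnorm : ‖Complex.exp (-((lam * Real.sqrt 2 : ℝ) : ℂ) * z ^ ((-p : ℝ) : ℂ))‖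
      = Real.exp (-(lam * Real.sqrt 2) * (z ^ ((-p : ℝ) : ℂ)).re) := by
    rw [Complex.norm_exp]
    congr 1
    rw [← Complex.ofReal_neg, Complex.re_ofReal_mul]
  rw [hnorm]
  apply Real.exp_le_exp.mpr
  have hsqrt2 : Real.sqrt 2 * Real.sqrt 2 = 2 := Real.mul_self_sqrt (by norm_num)
  have hsqrt2pos : 0 < Real.sqrt 2 := by positivity
  rw [hrepow]
  have key : lam * (2*x) ^ (-p) ≤
      lam * Real.sqrt 2 * (‖z‖ ^ (-p) * Real.cos (Complex.arg z * (-p))) := by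
    calc lam * (2*x) ^ (-p) = lam * Real.sqrt 2 * ((2*x) ^ (-p) * (Real.sqrt 2 / 2)) := by
          linear_combination (-(lam * (2*x) ^ (-p)) / 2) * hsqrt2
      _ ≤ lam * Real.sqrt 2 * (‖z‖ ^ (-p) * Real.cos (Complex.arg z * (-p))) := by
          apply mul_le_mul_of_nonneg_left _ (by positivity)
          apply mul_le_mul hpowle hcos (by positivity) (by positivity)
  linarith

section
variable {p lam : ℝ}

lemma F_diff (hp : 0 < p) {z : ℂ} (hz : 0 < z.re) :
    DifferentiableAt ℂ (fun z : ℂ => Complex.exp (-((lam * Real.sqrt 2 : ℝ) : ℂ) * z ^ ((-p : ℝ) : ℂ))) z := by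
  have hslit : z ∈ Complex.slitPlane := Or.inl hz
  exact (((differentiableAt_id.cpow (differentiableAt_const _) hslit)).const_mul _).cexp

lemma F_analytic_iter (hp : 0 < p) (k : ℕ) :
    AnalyticOnNhd ℂ
      (iteratedDeriv k (fun z : ℂ => Complex.exp (-((lam * Real.sqrt 2 : ℝ) : ℂ) * z ^ ((-p : ℝ) : ℂ))))
      {z : ℂ | 0 < z.re} := by
  have hU : IsOpen {z : ℂ | 0 < z.re} := isOpen_lt continuous_const Complex.continuous_re
  induction k with
  | zero =>
    simp only [iteratedDeriv_zero]
    have hdo : DifferentiableOn ℂ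
        (fun z : ℂ => Complex.exp (-((lam * Real.sqrt 2 : ℝ) : ℂ) * z ^ ((-p : ℝ) : ℂ)))
        {z : ℂ | 0 < z.re} :=
      fun z hz => (F_diff hp hz).differentiableWithinAt
    exact hdo.analyticOnNhd hU
  | succ k ih =>
    rw [iteratedDeriv_succ]
    exact ih.deriv

lemma iter_eq (hp : 0 < p) (hlam : 0 < lam) {f : ℝ → ℝ}
    (hf : ∀ x : ℝ, f x = if 0 < x then Real.exp (-(lam * Real.sqrt 2) * x ^ (-p)) else 0)
    (k : ℕ) : ∀ x : ℝ, 0 < x →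
      ((iteratedDeriv k f x : ℝ) : ℂ) =
        iteratedDeriv k (fun z : ℂ => Complex.exp (-((lam * Real.sqrt 2 : ℝ) : ℂ) * z ^ ((-p : ℝ) : ℂ))) x := by
  set F : ℂ → ℂ := fun z : ℂ => Complex.exp (-((lam * Real.sqrt 2 : ℝ) : ℂ) * z ^ ((-p : ℝ) : ℂ)) with hF
  induction k with
  | zero =>
    intro x hx
    simp only [iteratedDeriv_zero, hF]
    rw [hf x, if_pos hx]
    rw [← Complex.ofReal_cpow hx.le (-p), ← Complex.ofReal_neg, ← Complex.ofReal_mul,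
      ← Complex.ofReal_exp]
  | succ k ih =>
    intro x hx
    have hmem : Set.Ioi (0:ℝ) ∈ nhds x := Ioi_mem_nhds hx
    have hEq : (fun t : ℝ => ((iteratedDeriv k f t : ℝ) : ℂ)) =ᶠ[nhds x]
        (fun t : ℝ => iteratedDeriv k F ↑t) :=
      Filter.eventually_of_mem hmem (fun t ht => ih t ht)
    have hre' : (0:ℝ) < ((x:ℂ)).re := by simpa using hx
    have hD : HasDerivAt (iteratedDeriv k F) (iteratedDeriv (k+1) F ↑x) ↑x := by
      rw [iteratedDeriv_succ]
      exact ((F_analytic_iter hp k ↑x hre').differentiableAt).hasDerivAt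
    have hDr : HasDerivAt (fun t : ℝ => iteratedDeriv k F ↑t) (iteratedDeriv (k+1) F ↑x) x :=
      hD.comp_ofReal
    have hDr' : HasDerivAt (fun t : ℝ => ((iteratedDeriv k f t : ℝ) : ℂ))
        (iteratedDeriv (k+1) F ↑x) x := hDr.congr_of_eventuallyEq hEq
    set d := iteratedDeriv (k+1) F ↑x with hd
    have hre : HasDerivAt (iteratedDeriv k f) d.re x := by
      have h2 := (Complex.reCLM.hasFDerivAt).comp_hasDerivAt x hDr'
      simpa [Function.comp_def] using h2
    have him : HasDerivAt (fun _ : ℝ => (0:ℝ)) d.im x := by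
      have h2 := (Complex.imCLM.hasFDerivAt).comp_hasDerivAt x hDr'
      simpa [Function.comp_def] using h2
    have him0 : d.im = 0 := (him.unique (hasDerivAt_const x 0))
    have h3 : iteratedDeriv (k+1) f x = d.re := by
      rw [iteratedDeriv_succ]
      exact hre.deriv
    rw [h3]
    apply Complex.ext <;> simp [him0]
end

/-- Cauchy-type derivative bounds for `f_λ(x) = exp(-λ√2·x^{-p})` (for `x > 0`,
extended by `0` for `x ≤ 0`): for every `k ∈ ℕ` and `x > 0`,
`|f_λ^{(k)}(x)| ≤ (2/sin σ)^k·(k/(λpe))^{k/p}·k!` with `σ = (π/4)·min{1,1/p}`. -/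
theorem iteratedDeriv_f_lambda_bound
    (p lam : ℝ) (hp : 0 < p) (hlam : 0 < lam)
    (σ : ℝ) (hσ : σ = (Real.pi / 4) * min 1 (1 / p))
    (f : ℝ → ℝ)
    (hf : ∀ x : ℝ, f x = if 0 < x then Real.exp (-(lam * Real.sqrt 2) * x ^ (-p)) else 0) :
    ∀ (k : ℕ) (x : ℝ), 0 < x →
      |iteratedDeriv k f x| ≤
        (2 / Real.sin σ) ^ k * ((k : ℝ) / (lam * p * Real.exp 1)) ^ ((k : ℝ) / p)
          * (k.factorial : ℝ) := by
  intro k x hx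
  obtain ⟨hσ0, hσ4, hpσ, hs0, hs1⟩ := sigma_facts hp hσ
  set F : ℂ → ℂ := fun z : ℂ => Complex.exp (-((lam * Real.sqrt 2 : ℝ) : ℂ) * z ^ ((-p : ℝ) : ℂ))
    with hF
  set s := Real.sin σ with hs
  set r := x * s with hr
  have hr0 : 0 < r := by positivity
  set M := Real.exp (-(lam * (2*x) ^ (-p))) with hM
  set C := ((k : ℝ) / (lam * p * Real.exp 1)) ^ ((k : ℝ) / p) with hC
  have hball : ∀ z ∈ Metric.closedBall (x : ℂ) r, 0 < z.re ∧ ‖F z‖ ≤ M :=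
    fun z hz => F_bound hp hlam hσ hx hz
  have hd : DifferentiableOn ℂ F (Metric.closedBall (x:ℂ) r) :=
    fun z hz => (F_diff hp (hball z hz).1).differentiableWithinAt
  have hMz : ∀ z ∈ Metric.closedBall (x:ℂ) r, ‖F z‖ ≤ M := fun z hz => (hball z hz).2
  have hcauchy := cauchy_iteratedDeriv_bound hr0 hd hMz k
  have hiter := iter_eq hp hlam hf k x hx
  have habs : |iteratedDeriv k f x| = ‖iteratedDeriv k F (x:ℂ)‖ := by
    rw [← hiter, Complex.norm_real, Real.norm_eq_abs]
  -- arithmetic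
  have hy : (0:ℝ) < (2*x)⁻¹ := by positivity
  have hsup := sup_bound hp hlam k hy
  have h1 : ((2*x)⁻¹ : ℝ) ^ p = (2*x) ^ (-p) := by
    rw [Real.inv_rpow (by positivity : (0:ℝ) ≤ 2*x), ← Real.rpow_neg (by positivity : (0:ℝ) ≤ 2*x)]
  have h2 : ((2*x)⁻¹ : ℝ) ^ ((k:ℝ)) = ((2*x)^k)⁻¹ := by
    rw [Real.rpow_natCast, inv_pow]
  rw [h1, h2] at hsup
  have hpk : (0:ℝ) < (2*x)^k := by positivity
  have hM2 : M ≤ (2*x)^k * C := by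
    rw [← inv_mul_le_iff₀ hpk]
    exact hsup
  have hC0 : (0:ℝ) ≤ C := Real.rpow_nonneg (by positivity) _
  have hxs : (0:ℝ) < (x*s)^k := by positivity
  calc |iteratedDeriv k f x| = ‖iteratedDeriv k F (x:ℂ)‖ := habs
    _ ≤ (k.factorial : ℝ) * M / r ^ k := hcauchy
    _ ≤ (k.factorial : ℝ) * ((2*x)^k * C) / r ^ k := by gcongr
    _ = (2 / s) ^ k * C * (k.factorial : ℝ) := by
        rw [hr, mul_pow, mul_pow, div_pow]
        field_simp
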